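/- arXiv:math/0006095 — 3 statements merged into one kernel-verified Lean document; each statement's English description precedes it below -/
import Mathlib

section
/- Let G be a finite group and T : G → GL_m(ℂ) a complex representation; extend T ℂ-linearly to an algebra map T : ℂ[G] → M_m(ℂ), and further to T : M_n(ℂ[G]) → M_{nm}(ℂ) by applying T to each entry. Extend the involution x ↦ x̄ of ℂ[G] to matrices over ℂ[G] by transposition together with the involution on each entry, A ↦ Ā. Then for every invertible matrix A ∈ GL_n(ℂ[G]), |det(T(Ā))| = |det(T(A))|. -/
open scoped BigOperators

/-- The involution `x ↦ x̄` of the complex group algebra `ℂ[G]`, sending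
`Σ a_g g` to `Σ (conj a_g) g⁻¹`. -/
noncomputable def groupAlgConj {G : Type*} [Group G] [Fintype G]
    (x : MonoidAlgebra ℂ G) : MonoidAlgebra ℂ G :=
  ∑ g : G, MonoidAlgebra.single g⁻¹ (starRingEnd ℂ (x.coeff g))

/-- The extension of a representation `T : G → GL_m(ℂ)` (given as a multiplicative map
into `m × m` matrices; its values are automatically invertible) first `ℂ`-linearly to
`ℂ[G] → M_m(ℂ)`, and then entrywise to a map sending an `n × n` matrix over `ℂ[G]` to an
`nm × nm` complex (block) matrix. -/
noncomputable def blockApply {G : Type*} [Group G] [Fintype G] {m n : ℕ}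
    (T : G →* Matrix (Fin m) (Fin m) ℂ)
    (A : Matrix (Fin n) (Fin n) (MonoidAlgebra ℂ G)) :
    Matrix (Fin n × Fin m) (Fin n × Fin m) ℂ :=
  fun ip jq => ((MonoidAlgebra.lift ℂ (Matrix (Fin m) (Fin m) ℂ) G T) (A ip.1 jq.1)) ip.2 jq.2

/-- The conjugate-transpose `Ā` of a matrix over `ℂ[G]`:  transpose combined with the
involution `x ↦ x̄` of `ℂ[G]` applied to each entry. -/
noncomputable def matrixGroupAlgConj {G : Type*} [Group G] [Fintype G] {n : ℕ}
    (A : Matrix (Fin n) (Fin n) (MonoidAlgebra ℂ G)) :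
    Matrix (Fin n) (Fin n) (MonoidAlgebra ℂ G) :=
  fun i j => groupAlgConj (A j i)

open scoped ComplexOrder Matrix

section Aux

variable {G : Type*} [Group G] [Fintype G] {m n : ℕ}

/-- The "dual conjugate" representation `g ↦ (T g⁻¹)ᴴ`. -/
noncomputable def dualConjRep (T : G →* Matrix (Fin m) (Fin m) ℂ) :
    G →* Matrix (Fin m) (Fin m) ℂ where
  toFun g := (T g⁻¹)ᴴ
  map_one' := by simp
  map_mul' g h := by
    simp [mul_inv_rev, Matrix.conjTranspose_mul]

/-- The averaging (unitarization) matrix `H = Σ_h (T h)ᴴ (T h)`. -/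
noncomputable def unitH (T : G →* Matrix (Fin m) (Fin m) ℂ) :
    Matrix (Fin m) (Fin m) ℂ :=
  ∑ h : G, (T h)ᴴ * (T h)

lemma unitH_posDef (T : G →* Matrix (Fin m) (Fin m) ℂ) : (unitH T).PosDef := by
  classical
  have h1 : (1 : G) ∈ (Finset.univ : Finset G) := Finset.mem_univ _
  rw [unitH, ← Finset.sum_erase_add _ _ h1]
  refine Matrix.PosDef.posSemidef_add ?_ ?_
  · exact Finset.sum_induction _ _ (fun a b ha hb => ha.add hb) (Matrix.PosSemidef.zero)
      (fun h _ => Matrix.posSemidef_conjTranspose_mul_self _)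
  · simpa using (Matrix.PosDef.one : (1 : Matrix (Fin m) (Fin m) ℂ).PosDef)

lemma dualConjRep_mul_unitH (T : G →* Matrix (Fin m) (Fin m) ℂ) (g : G) :
    dualConjRep T g * unitH T = unitH T * T g := by
  simp only [dualConjRep, MonoidHom.coe_mk, OneHom.coe_mk, unitH, Finset.mul_sum,
    Finset.sum_mul]
  refine Fintype.sum_equiv (Equiv.mulRight g⁻¹) _ _ fun h => ?_
  simp only [Equiv.coe_mulRight]
  have h1 : T h * T g⁻¹ * T g = T h := by
    rw [mul_assoc, ← map_mul, inv_mul_cancel, map_one, mul_one]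
  rw [map_mul, Matrix.conjTranspose_mul, mul_assoc ((T g⁻¹)ᴴ * (T h)ᴴ), h1, mul_assoc]

lemma lift_dualConjRep_mul_unitH (T : G →* Matrix (Fin m) (Fin m) ℂ)
    (x : MonoidAlgebra ℂ G) :
    (MonoidAlgebra.lift ℂ _ G (dualConjRep T)) x * unitH T
      = unitH T * (MonoidAlgebra.lift ℂ _ G T) x := by
  induction x using MonoidAlgebra.induction_on with
  | of g => simpa using dualConjRep_mul_unitH T g
  | add x y hx hy => simp [add_mul, mul_add, hx, hy]
  | smul c x hx => simp [smul_mul_assoc, mul_smul_comm, hx]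

lemma groupAlgConj_add (x y : MonoidAlgebra ℂ G) :
    groupAlgConj (x + y) = groupAlgConj x + groupAlgConj y := by
  simp only [groupAlgConj, ← Finset.sum_add_distrib, ← MonoidAlgebra.single_add]
  refine Finset.sum_congr rfl fun g _ => ?_
  rw [MonoidAlgebra.coeff_add, Finsupp.add_apply, map_add]

lemma groupAlgConj_smul (c : ℂ) (x : MonoidAlgebra ℂ G) :
    groupAlgConj (c • x) = (starRingEnd ℂ c) • groupAlgConj x := by
  simp only [groupAlgConj, Finset.smul_sum]
  refine Finset.sum_congr rfl fun g _ => ?_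
  rw [MonoidAlgebra.coeff_smul_apply, smul_eq_mul, map_mul, MonoidAlgebra.smul_single']

lemma groupAlgConj_of (g : G) :
    groupAlgConj (MonoidAlgebra.of ℂ G g) = MonoidAlgebra.single g⁻¹ 1 := by
  classical
  have : ∀ h : G, MonoidAlgebra.single h⁻¹
      (starRingEnd ℂ ((MonoidAlgebra.of ℂ G g).coeff h))
      = if g = h then MonoidAlgebra.single h⁻¹ (1:ℂ) else 0 := by
    intro h
    by_cases hh : g = h <;>
      simp [MonoidAlgebra.of_apply, MonoidAlgebra.coeff_single, Finsupp.single_apply, hh]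
  rw [groupAlgConj]
  simp only [this, Finset.sum_ite_eq, Finset.mem_univ, if_true]

lemma lift_groupAlgConj (T : G →* Matrix (Fin m) (Fin m) ℂ) (x : MonoidAlgebra ℂ G) :
    (MonoidAlgebra.lift ℂ _ G T) (groupAlgConj x)
      = ((MonoidAlgebra.lift ℂ _ G (dualConjRep T)) x)ᴴ := by
  induction x using MonoidAlgebra.induction_on with
  | of g =>
      rw [groupAlgConj_of]
      simp [MonoidAlgebra.lift_single, dualConjRep]
  | add x y hx hy => simp [groupAlgConj_add, hx, hy]
  | smul c x hx =>
      rw [groupAlgConj_smul, map_smul, hx, map_smul]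
      simp [Matrix.conjTranspose_smul]

/-- The block-diagonal matrix with `n` copies of `unitH T`. -/
noncomputable def bigH (T : G →* Matrix (Fin m) (Fin m) ℂ) (n : ℕ) :
    Matrix (Fin n × Fin m) (Fin n × Fin m) ℂ :=
  fun ip jq => if ip.1 = jq.1 then unitH T ip.2 jq.2 else 0

lemma det_bigH (T : G →* Matrix (Fin m) (Fin m) ℂ) (n : ℕ) :
    (bigH T n).det = (unitH T).det ^ n := by
  classical
  have : bigH T n = (Matrix.blockDiagonal fun _ : Fin n => unitH T).reindex
      (Equiv.prodComm (Fin m) (Fin n)) (Equiv.prodComm (Fin m) (Fin n)) := by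
    ext ⟨i, p⟩ ⟨j, q⟩
    simp [bigH, Matrix.blockDiagonal_apply, eq_comm]
  rw [this, Matrix.det_reindex_self, Matrix.det_blockDiagonal]
  simp

lemma blockApply_dual_mul_bigH (T : G →* Matrix (Fin m) (Fin m) ℂ)
    (A : Matrix (Fin n) (Fin n) (MonoidAlgebra ℂ G)) :
    blockApply (dualConjRep T) A * bigH T n = bigH T n * blockApply T A := by
  classical
  ext ⟨i, p⟩ ⟨j, q⟩
  have key := lift_dualConjRep_mul_unitH T (A i j)
  have hkey : ((MonoidAlgebra.lift ℂ _ G (dualConjRep T)) (A i j) * unitH T) p q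
      = (unitH T * (MonoidAlgebra.lift ℂ _ G T) (A i j)) p q := by rw [key]
  simp only [Matrix.mul_apply, Fintype.sum_prod_type, blockApply, bigH] at hkey ⊢
  simp only [mul_ite, mul_zero, ite_mul, zero_mul, Finset.sum_ite_irrel,
    Finset.sum_const_zero, Finset.sum_ite_eq, Finset.sum_ite_eq',
    Finset.mem_univ, if_true]
  exact hkey

end Aux

/-- For every invertible `n × n` matrix `A` over `ℂ[G]` and every representation
`T : G → GL_m(ℂ)`, one has `|det T(Ā)| = |det T(A)|`. -/
theorem abs_det_blockApply_conj {G : Type*} [Group G] [Fintype G] {m n : ℕ}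
    (T : G →* Matrix (Fin m) (Fin m) ℂ)
    (A : Matrix (Fin n) (Fin n) (MonoidAlgebra ℂ G))
    (hA : IsUnit A) :
    ‖Matrix.det (blockApply T (matrixGroupAlgConj A))‖
      = ‖Matrix.det (blockApply T A)‖ := by
  classical
  have hconj : blockApply T (matrixGroupAlgConj A) = (blockApply (dualConjRep T) A)ᴴ := by
    ext ⟨i, p⟩ ⟨j, q⟩
    simp only [blockApply, matrixGroupAlgConj, Matrix.conjTranspose_apply]
    rw [lift_groupAlgConj]
    simp [Matrix.conjTranspose_apply]
  have hdetH : (unitH T : Matrix (Fin m) (Fin m) ℂ).det ≠ 0 := (unitH_posDef T).det_pos.ne'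
  have hdetC : (bigH T n).det ≠ 0 := by
    rw [det_bigH]; exact pow_ne_zero _ hdetH
  have hdet : (blockApply (dualConjRep T) A).det = (blockApply T A).det := by
    have := congrArg Matrix.det (blockApply_dual_mul_bigH T A)
    rw [Matrix.det_mul, Matrix.det_mul] at this
    have h2 : (blockApply (dualConjRep T) A).det * (bigH T n).det
        = (blockApply T A).det * (bigH T n).det := by rw [this]; ring
    exact mul_right_cancel₀ hdetC h2
  rw [hconj, Matrix.det_conjTranspose, hdet]
  simp [Complex.norm_conj]
end

section
/- Let G be a finite group, I ≤ G a cyclic subgroup, and V a finite-dimensional complex representation of G admitting a G-invariant non-degenerate alternating bilinear form (i.e. V is a symplectic representation of G). Then dim_ℂ V − dim_ℂ V^I is an even integer, where V^I denotes the subspace of I-fixed vectors. Equivalently, the inner product of the character of V with Ind_I^G u_I is even, where u_I is the regular character of I minus the trivial character of I. -/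
open Module

/-- A finite-dimensional space with a nondegenerate alternating bilinear form has even rank. -/
lemma even_finrank_of_alt_nondeg {V : Type*} [AddCommGroup V] [Module ℂ V]
    [FiniteDimensional ℂ V] (ω : V →ₗ[ℂ] V →ₗ[ℂ] ℂ)
    (halt : ∀ v : V, ω v v = 0)
    (hnondeg : ∀ v : V, (∀ u : V, ω v u = 0) → v = 0) :
    Even (Module.finrank ℂ V) := by
  set n := Module.finrank ℂ V with hn
  let b : Basis (Fin n) ℂ V := Module.finBasis ℂ V
  have hNd : LinearMap.BilinForm.Nondegenerate (ω : LinearMap.BilinForm ℂ V) :=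
    LinearMap.BilinForm.Nondegenerate.ofSeparatingLeft hnondeg
  have hdet : (LinearMap.BilinForm.toMatrix b ω).det ≠ 0 :=
    (LinearMap.BilinForm.nondegenerate_iff_det_ne_zero b).mp hNd
  have hAlt : LinearMap.IsAlt (ω : LinearMap.BilinForm ℂ V) := halt
  have hskew : (LinearMap.BilinForm.toMatrix b ω).transpose = -(LinearMap.BilinForm.toMatrix b ω) := by
    ext i j
    simp only [Matrix.transpose_apply, Matrix.neg_apply, LinearMap.BilinForm.toMatrix_apply]
    exact (hAlt.neg (b i) (b j)).symm
  by_contra hodd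
  rw [Nat.not_even_iff_odd] at hodd
  apply hdet
  have h1 : (LinearMap.BilinForm.toMatrix b ω).det =
      ((-1 : ℂ) ^ n) * (LinearMap.BilinForm.toMatrix b ω).det := by
    conv_lhs => rw [← Matrix.det_transpose, hskew]
    rw [Matrix.det_neg, Fintype.card_fin]
  rw [Odd.neg_one_pow hodd, neg_one_mul] at h1
  linear_combination h1 / 2

/-- Let `G` be a finite group, `I ≤ G` a cyclic subgroup, and `V` a finite-dimensional complex
representation of `G` admitting a `G`-invariant non-degenerate alternating bilinear form
(i.e. `V` is a symplectic representation of `G`).  Then `dim_ℂ V − dim_ℂ V^I` is even,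
where `V^I` is the subspace of `I`-fixed vectors. -/
theorem even_codim_fixed_of_symplectic {G : Type*} [Group G] [Fintype G]
    {V : Type*} [AddCommGroup V] [Module ℂ V] [FiniteDimensional ℂ V]
    (ρ : Representation ℂ G V) (I : Subgroup G) (hI : IsCyclic I)
    (ω : V →ₗ[ℂ] V →ₗ[ℂ] ℂ)
    (halt : ∀ v : V, ω v v = 0)
    (hnondeg : ∀ v : V, (∀ u : V, ω v u = 0) → v = 0)
    (hinv : ∀ (g : G) (v u : V), ω (ρ g v) (ρ g u) = ω v u) :
    Even (Module.finrank ℂ V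
      - Module.finrank ℂ ↥(⨅ g : I, LinearMap.eqLocus (ρ (g : G)) (LinearMap.id : V →ₗ[ℂ] V))) := by
  set W := ⨅ g : I, LinearMap.eqLocus (ρ (g : G)) (LinearMap.id : V →ₗ[ℂ] V) with hW
  have hmemW : ∀ v : V, v ∈ W ↔ ∀ g : I, ρ (g : G) v = v := by
    intro v
    simp [hW, Submodule.mem_iInf, LinearMap.eqLocus]
  -- key invariance: for v ∈ W, ω v (ρ g u) = ω v u for g ∈ I
  haveI : Fintype I := Fintype.ofFinite I
  have hkey : ∀ (v : W) (g : I) (u : V), ω (v : V) (ρ (g : G) u) = ω (v : V) u := by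
    intro v g u
    have hv : ρ (g : G) (v : V) = (v : V) := (hmemW v).mp v.2 g
    nth_rewrite 1 [← hv]
    exact hinv _ _ _
  -- restricted form on W
  set ω' : W →ₗ[ℂ] W →ₗ[ℂ] ℂ := ω.compl₁₂ W.subtype W.subtype with hω'
  have hω'apply : ∀ v u : W, ω' v u = ω (v : V) (u : V) := fun v u => rfl
  have hEvenW : Even (Module.finrank ℂ W) := by
    apply even_finrank_of_alt_nondeg ω'
    · intro v; rw [hω'apply]; exact halt _
    · intro v hv
      have hvV : ∀ u : V, ω (v : V) u = 0 := by
        intro u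
        -- average u over I
        set a : V := ∑ g : I, ρ (g : G) u with ha
        have haW : a ∈ W := by
          rw [hmemW]
          intro h
          rw [ha, map_sum]
          refine Fintype.sum_equiv (Equiv.mulLeft h) _ _ fun g => ?_
          show ρ (h : G) (ρ (g : G) u) = ρ ((h * g : I) : G) u
          rw [Subgroup.coe_mul, map_mul]
          rfl
        have h1 : ω (v : V) a = (Fintype.card I : ℂ) * ω (v : V) u := by
          rw [ha, map_sum]
          rw [Finset.sum_congr rfl (fun g _ => hkey v g u), Finset.sum_const,
            nsmul_eq_mul, Finset.card_univ]
        have h2 : ω (v : V) a = 0 := hv ⟨a, haW⟩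
        rw [h1] at h2
        have hcard : (Fintype.card I : ℂ) ≠ 0 := by
          exact_mod_cast Fintype.card_ne_zero
        exact (mul_eq_zero.mp h2).resolve_left hcard
      have : (v : V) = 0 := hnondeg _ hvV
      exact Subtype.ext this
  have hEvenV : Even (Module.finrank ℂ V) := even_finrank_of_alt_nondeg ω halt hnondeg
  have hle : Module.finrank ℂ W ≤ Module.finrank ℂ V := Submodule.finrank_le W
  rw [Nat.even_sub hle]
  simp [hEvenV, hEvenW]
end

section
/- Every unit x of the finite adele ring of ℚ (the restricted product of the completions ℚ_p with respect to the subrings ℤ_p, over all prime numbers p) admits a factorization x = q·u where q is a positive rational number (viewed diagonally in the finite adeles) and u is a unit of the finite adele ring whose component at every prime p is a unit of ℤ_p (equivalently, both u and u⁻¹ have all components integral). Moreover this factorization is unique: if q·u = q′·u′ with q, q′ positive rationals and u, u′ everywhere-integral unit ideles, then q = q′ and u = u′. -/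
open IsDedekindDomain

abbrev ProdAdicCompletions (R K : Type*) [CommRing R] [IsDedekindDomain R] [Field K]
    [Algebra R K] [IsFractionRing R K] :=
  ∀ v : HeightOneSpectrum R, v.adicCompletion K

section Helpers
open HeightOneSpectrum
noncomputable section
-- pointwise ops
lemma FAR_mul_apply (a b : FiniteAdeleRing ℤ ℚ) (v : HeightOneSpectrum ℤ) :
    ((a * b : FiniteAdeleRing ℤ ℚ) : ProdAdicCompletions ℤ ℚ) v
      = (a : ProdAdicCompletions ℤ ℚ) v * (b : ProdAdicCompletions ℤ ℚ) v := rfl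

lemma FAR_one_apply (v : HeightOneSpectrum ℤ) :
    ((1 : FiniteAdeleRing ℤ ℚ) : ProdAdicCompletions ℤ ℚ) v = 1 := rfl

lemma unit_val_mul (a : (FiniteAdeleRing ℤ ℚ)ˣ) (v : HeightOneSpectrum ℤ) :
    Valued.v (((a : FiniteAdeleRing ℤ ℚ) : ProdAdicCompletions ℤ ℚ) v) *
      Valued.v ((((a⁻¹ : (FiniteAdeleRing ℤ ℚ)ˣ) : FiniteAdeleRing ℤ ℚ) :
        ProdAdicCompletions ℤ ℚ) v) = 1 := by
  rw [← map_mul, ← FAR_mul_apply]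
  rw [← Units.val_mul, mul_inv_cancel, Units.val_one, FAR_one_apply, map_one]

lemma val_eq_one_of {a b : (WithZero (Multiplicative ℤ))} (ha : a ≤ 1) (hb : b ≤ 1)
    (h : a * b = 1) : a = 1 := by
  refine le_antisymm ha ?_
  calc (1 : WithZero (Multiplicative ℤ)) = a * b := h.symm
    _ ≤ a * 1 := mul_le_mul' le_rfl hb
    _ = a := mul_one a

lemma FAR_algebraMap_apply (k : ℚ) (v : HeightOneSpectrum ℤ) :
    ((algebraMap ℚ (FiniteAdeleRing ℤ ℚ) k : FiniteAdeleRing ℤ ℚ) :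
      ProdAdicCompletions ℤ ℚ) v = algebraMap ℚ (ProdAdicCompletions ℤ ℚ) k v := rfl

lemma val_FAR_algebraMap (k : ℚ) (v : HeightOneSpectrum ℤ) :
    Valued.v (((algebraMap ℚ (FiniteAdeleRing ℤ ℚ) k : FiniteAdeleRing ℤ ℚ) :
      ProdAdicCompletions ℤ ℚ) v) = v.valuation ℚ k := by
  rw [FAR_algebraMap_apply]
  exact valuedAdicCompletion_eq_valuation' v k

lemma ofAdd_neg_one_zpow (n : ℤ) :
    ((Multiplicative.ofAdd (-1 : ℤ) : Multiplicative ℤ) : WithZero (Multiplicative ℤ)) ^ n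
      = ((Multiplicative.ofAdd (-n : ℤ) : Multiplicative ℤ) : WithZero (Multiplicative ℤ)) := by
  rw [← WithZero.coe_zpow, WithZero.coe_inj, ← ofAdd_zsmul]
  simp

def gen (v : HeightOneSpectrum ℤ) : ℤ := (Submodule.IsPrincipal.generator v.asIdeal).natAbs

lemma span_gen (v : HeightOneSpectrum ℤ) : v.asIdeal = Ideal.span {gen v} := by
  rw [gen, Int.span_natAbs]
  exact (Ideal.span_singleton_generator _).symm

lemma gen_ne_zero (v : HeightOneSpectrum ℤ) : gen v ≠ 0 := by
  intro h
  apply v.ne_bot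
  rw [span_gen v, h]
  exact Ideal.span_singleton_eq_bot.mpr rfl

lemma gen_pos (v : HeightOneSpectrum ℤ) : 0 < gen v := by
  have := gen_ne_zero v
  rw [gen] at *
  positivity

lemma intVal_gen_self (v : HeightOneSpectrum ℤ) :
    v.intValuation (gen v) = Multiplicative.ofAdd (-1 : ℤ) :=
  intValuation_singleton _ (gen_ne_zero v) (span_gen v)

lemma intVal_gen_ne {v w : HeightOneSpectrum ℤ} (h : w ≠ v) :
    w.intValuation (gen v) = 1 := by
  have hle := w.intValuation_le_one (gen v)
  rcases lt_or_eq_of_le hle with hlt | heq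
  · exfalso
    rw [intValuation_lt_one_iff_dvd, ← span_gen, Ideal.dvd_iff_le] at hlt
    exact h (by
      ext1
      exact (v.isMaximal.eq_of_le w.isPrime.ne_top hlt).symm)
  · exact heq

lemma exists_q (x : (FiniteAdeleRing ℤ ℚ)ˣ) :
    ∃ q : ℚ, 0 < q ∧ ∀ w : HeightOneSpectrum ℤ,
      (w.valuation ℚ (q : ℚ) : WithZero (Multiplicative ℤ))
        = Valued.v (((x : FiniteAdeleRing ℤ ℚ) : ProdAdicCompletions ℤ ℚ) w) := by
  classical
  set X : ProdAdicCompletions ℤ ℚ := ((x : FiniteAdeleRing ℤ ℚ) : ProdAdicCompletions ℤ ℚ) with hX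
  set Y : ProdAdicCompletions ℤ ℚ :=
    (((x⁻¹ : (FiniteAdeleRing ℤ ℚ)ˣ) : FiniteAdeleRing ℤ ℚ) : ProdAdicCompletions ℤ ℚ) with hY
  have hmul : ∀ v, Valued.v (X v) * Valued.v (Y v) = 1 := unit_val_mul x
  have hXne : ∀ v, Valued.v (X v) ≠ 0 := by
    intro v h
    have := hmul v
    rw [h, zero_mul] at this
    exact zero_ne_one this
  have hS : {v : HeightOneSpectrum ℤ | Valued.v (X v) ≠ 1}.Finite := by
    have h1 : ∀ᶠ v in Filter.cofinite, X v ∈ v.adicCompletionIntegers ℚ :=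
      (x : FiniteAdeleRing ℤ ℚ).2
    have h2 : ∀ᶠ v in Filter.cofinite, Y v ∈ v.adicCompletionIntegers ℚ :=
      ((x⁻¹ : (FiniteAdeleRing ℤ ℚ)ˣ) : FiniteAdeleRing ℤ ℚ).2
    have h3 : ∀ᶠ v in Filter.cofinite, Valued.v (X v) = 1 := by
      filter_upwards [h1, h2] with v hv1 hv2
      exact val_eq_one_of ((mem_adicCompletionIntegers ℤ ℚ v).mp hv1)
        ((mem_adicCompletionIntegers ℤ ℚ v).mp hv2) (hmul v)
    exact Filter.eventually_cofinite.mp h3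
  set f : HeightOneSpectrum ℤ → ℤ := fun v =>
    if h : Valued.v (X v) = 0 then 0 else -Multiplicative.toAdd (WithZero.unzero h) with hfdef
  have hf : ∀ v, Valued.v (X v)
      = ((Multiplicative.ofAdd (-(f v)) : Multiplicative ℤ) : WithZero (Multiplicative ℤ)) := by
    intro v
    have h := hXne v
    simp only [hfdef, dif_neg h]
    rw [neg_neg, ofAdd_toAdd, WithZero.coe_unzero]
  refine ⟨∏ v ∈ hS.toFinset, ((gen v : ℤ) : ℚ) ^ (f v), ?_, ?_⟩
  · apply Finset.prod_pos
    intro v _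
    apply zpow_pos
    exact_mod_cast gen_pos v
  · intro w
    have hval_gen : ∀ v : HeightOneSpectrum ℤ,
        w.valuation ℚ (((gen v : ℤ) : ℚ)) = w.intValuation (gen v) := by
      intro v
      rw [← eq_intCast (algebraMap ℤ ℚ) (gen v), valuation_of_algebraMap]
    rw [map_prod]
    have hfac : ∀ v ∈ hS.toFinset, w.valuation ℚ (((gen v : ℤ) : ℚ) ^ f v)
        = (w.intValuation (gen v) : WithZero (Multiplicative ℤ)) ^ (f v) := by
      intro v _
      rw [map_zpow₀, hval_gen]
    rw [Finset.prod_congr rfl hfac]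
    by_cases hw : w ∈ hS.toFinset
    · rw [Finset.prod_eq_single_of_mem w hw (fun v _ hvw => by
        rw [intVal_gen_ne (Ne.symm hvw), one_zpow]),
        intVal_gen_self, ofAdd_neg_one_zpow, hf w]
    · have h1 : Valued.v (X w) = 1 := by
        by_contra hne
        exact hw (hS.mem_toFinset.mpr hne)
      rw [h1]
      apply Finset.prod_eq_one
      intro v hv
      have hvw : v ≠ w := by
        intro h
        subst h
        exact (hS.mem_toFinset.mp hv) (by
          by_contra hne
          exact hw (hS.mem_toFinset.mpr hne))
      rw [intVal_gen_ne (Ne.symm hvw), one_zpow]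

lemma span_eq_of_intVal_eq {a b : ℤ} (ha : a ≠ 0) (hb : b ≠ 0)
    (h : ∀ v : HeightOneSpectrum ℤ, v.intValuationDef a = v.intValuationDef b) :
    Ideal.span ({a} : Set ℤ) = Ideal.span {b} := by
  classical
  rw [← associated_iff_eq, ← Associates.mk_eq_mk_iff_associated]
  apply Associates.eq_of_eq_counts
  · exact Associates.mk_ne_zero.mpr (by simpa using ha)
  · exact Associates.mk_ne_zero.mpr (by simpa using hb)
  intro p hp
  obtain ⟨J, rfl⟩ := Associates.exists_rep p
  rw [Associates.irreducible_mk] at hp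
  set v : HeightOneSpectrum ℤ :=
    ⟨J, Ideal.isPrime_of_prime (irreducible_iff_prime.mp hp), hp.ne_zero⟩ with hv
  have := h v
  rw [v.intValuationDef_if_neg ha, v.intValuationDef_if_neg hb] at this
  have h2 : (-(Associates.mk v.asIdeal).count (Associates.mk (Ideal.span {a} : Ideal ℤ)).factors : ℤ)
      = (-(Associates.mk v.asIdeal).count (Associates.mk (Ideal.span {b} : Ideal ℤ)).factors : ℤ) := by
    exact_mod_cast Multiplicative.ofAdd.injective (WithZero.coe_inj.mp this)
  simpa using h2

lemma num_mul_den {q : ℚ} : (q.num : ℚ) = q * ((q.den : ℤ) : ℚ) := by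
  have h := Rat.num_div_den q
  have hd : (q.den : ℚ) ≠ 0 := by exact_mod_cast q.den_nz
  push_cast
  exact_mod_cast (div_eq_iff hd).mp h

lemma rat_eq_of_val_eq {q q' : ℚ} (hq : 0 < q) (hq' : 0 < q')
    (h : ∀ v : HeightOneSpectrum ℤ, v.valuation ℚ (q : ℚ) = v.valuation ℚ q') : q = q' := by
  have hqden : ((q.den : ℤ) : ℚ) ≠ 0 := by exact_mod_cast q.den_nz
  have hq'den : ((q'.den : ℤ) : ℚ) ≠ 0 := by exact_mod_cast q'.den_nz
  have hnum : (q.num : ℚ) = q * ((q.den : ℤ) : ℚ) := num_mul_den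
  have hnum' : (q'.num : ℚ) = q' * ((q'.den : ℤ) : ℚ) := num_mul_den
  have ha : q.num * (q'.den : ℤ) ≠ 0 := by positivity
  have hb : q'.num * (q.den : ℤ) ≠ 0 := by positivity
  have key : ∀ v : HeightOneSpectrum ℤ,
      v.intValuationDef (q.num * (q'.den : ℤ)) = v.intValuationDef (q'.num * (q.den : ℤ)) := by
    intro v
    have e1 : (algebraMap ℤ ℚ) (q.num * (q'.den : ℤ)) = q * (((q.den : ℤ) : ℚ) * ((q'.den : ℤ) : ℚ)) := by
      rw [algebraMap_int_eq, Int.coe_castRingHom]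
      push_cast [hnum]
      ring
    have e2 : (algebraMap ℤ ℚ) (q'.num * (q.den : ℤ)) = q' * (((q.den : ℤ) : ℚ) * ((q'.den : ℤ) : ℚ)) := by
      rw [algebraMap_int_eq, Int.coe_castRingHom]
      push_cast [hnum']
      ring
    have h3 : v.valuation ℚ ((algebraMap ℤ ℚ) (q.num * (q'.den : ℤ)))
        = v.valuation ℚ ((algebraMap ℤ ℚ) (q'.num * (q.den : ℤ))) := by
      rw [e1, e2]
      simp only [map_mul, h v]
    rw [v.valuation_of_algebraMap, v.valuation_of_algebraMap] at h3
    rw [← intValuation_apply, ← intValuation_apply]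
    exact h3
  have hspan := span_eq_of_intVal_eq ha hb key
  rw [Ideal.span_singleton_eq_span_singleton] at hspan
  rcases Int.associated_iff.mp hspan with heq | heq
  · have hc : ((q.num * (q'.den:ℤ) : ℤ) : ℚ) = ((q'.num * (q.den:ℤ) : ℤ) : ℚ) := by exact_mod_cast heq
    push_cast at hc
    rw [hnum, hnum'] at hc
    have : q * (((q.den:ℤ):ℚ) * ((q'.den:ℤ):ℚ)) = q' * (((q.den:ℤ):ℚ) * ((q'.den:ℤ):ℚ)) := by
      linear_combination hc
    exact mul_right_cancel₀ (by positivity) this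
  · exfalso
    have h1 : (0:ℤ) < q.num * q'.den := by positivity
    have h2 : (0:ℤ) < q'.num * q.den := by positivity
    omega

end
end Helpers

/-- Every unit `x` of the finite adele ring of `ℚ` (the restricted product of the `ℚ_p` with
respect to the `ℤ_p`) factors uniquely as `x = q·u`, where `q` is a positive rational number
(embedded diagonally) and `u` is a unit all of whose components, and all of whose inverse's
components, are integral. -/
theorem finiteAdele_unit_factorization (x : (FiniteAdeleRing ℤ ℚ)ˣ) :
    ∃! qu : ℚ × (FiniteAdeleRing ℤ ℚ)ˣ,
      0 < qu.1 ∧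
      (∀ v : HeightOneSpectrum ℤ,
        (qu.2 : FiniteAdeleRing ℤ ℚ) v
          ∈ v.adicCompletionIntegers ℚ) ∧
      (∀ v : HeightOneSpectrum ℤ,
        ((qu.2⁻¹ : (FiniteAdeleRing ℤ ℚ)ˣ) : FiniteAdeleRing ℤ ℚ) v
          ∈ v.adicCompletionIntegers ℚ) ∧
      (x : FiniteAdeleRing ℤ ℚ) = algebraMap ℚ (FiniteAdeleRing ℤ ℚ) qu.1 * (qu.2 : FiniteAdeleRing ℤ ℚ) := by
  classical
  obtain ⟨q, hqpos, hqval⟩ := exists_q x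
  have hqne : (q : ℚ) ≠ 0 := ne_of_gt hqpos
  set Q : (FiniteAdeleRing ℤ ℚ)ˣ :=
    Units.map (algebraMap ℚ (FiniteAdeleRing ℤ ℚ)).toMonoidHom (Units.mk0 q hqne) with hQ
  have hQcoe : (Q : FiniteAdeleRing ℤ ℚ) = algebraMap ℚ (FiniteAdeleRing ℤ ℚ) q := rfl
  set u : (FiniteAdeleRing ℤ ℚ)ˣ := Q⁻¹ * x with hu
  set X : ProdAdicCompletions ℤ ℚ := ((x : FiniteAdeleRing ℤ ℚ) : ProdAdicCompletions ℤ ℚ) with hX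
  have hmulx : ∀ w, Valued.v (X w) *
      Valued.v ((((x⁻¹ : (FiniteAdeleRing ℤ ℚ)ˣ) : FiniteAdeleRing ℤ ℚ) :
        ProdAdicCompletions ℤ ℚ) w) = 1 := unit_val_mul x
  have hXne : ∀ w, Valued.v (X w) ≠ 0 := by
    intro w h
    have := hmulx w
    rw [h, zero_mul] at this
    exact zero_ne_one this
  have hvalQ : ∀ w, Valued.v (((Q : FiniteAdeleRing ℤ ℚ) : ProdAdicCompletions ℤ ℚ) w)
      = Valued.v (X w) := by
    intro w
    rw [hQcoe, val_FAR_algebraMap, hqval w]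
  have hvalQinv : ∀ w, Valued.v ((((Q⁻¹ : (FiniteAdeleRing ℤ ℚ)ˣ) : FiniteAdeleRing ℤ ℚ) :
      ProdAdicCompletions ℤ ℚ) w) = (Valued.v (X w))⁻¹ := by
    intro w
    have h := unit_val_mul Q w
    rw [hvalQ w] at h
    exact (inv_eq_of_mul_eq_one_right h).symm
  have hvalxinv : ∀ w, Valued.v ((((x⁻¹ : (FiniteAdeleRing ℤ ℚ)ˣ) : FiniteAdeleRing ℤ ℚ) :
      ProdAdicCompletions ℤ ℚ) w) = (Valued.v (X w))⁻¹ := by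
    intro w
    exact (inv_eq_of_mul_eq_one_right (hmulx w)).symm
  have hvalu : ∀ w, Valued.v (((u : FiniteAdeleRing ℤ ℚ) : ProdAdicCompletions ℤ ℚ) w) = 1 := by
    intro w
    rw [hu, Units.val_mul, FAR_mul_apply, map_mul, hvalQinv w]
    rw [← hX, inv_mul_cancel₀ (hXne w)]
  have hvaluinv : ∀ w, Valued.v ((((u⁻¹ : (FiniteAdeleRing ℤ ℚ)ˣ) : FiniteAdeleRing ℤ ℚ) :
      ProdAdicCompletions ℤ ℚ) w) = 1 := by
    intro w
    have huinv : u⁻¹ = x⁻¹ * Q := by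
      rw [hu, mul_inv_rev, inv_inv, mul_comm]
    rw [huinv, Units.val_mul, FAR_mul_apply, map_mul, hvalxinv w, hvalQ w,
      inv_mul_cancel₀ (hXne w)]
  have hxequ : (x : FiniteAdeleRing ℤ ℚ)
      = algebraMap ℚ (FiniteAdeleRing ℤ ℚ) q * (u : FiniteAdeleRing ℤ ℚ) := by
    rw [← hQcoe, ← Units.val_mul, hu, mul_inv_cancel_left]
  refine ⟨(q, u), ⟨hqpos, ?_, ?_, hxequ⟩, ?_⟩
  · intro w
    exact (HeightOneSpectrum.mem_adicCompletionIntegers ℤ ℚ w).mpr (le_of_eq (hvalu w))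
  · intro w
    exact (HeightOneSpectrum.mem_adicCompletionIntegers ℤ ℚ w).mpr (le_of_eq (hvaluinv w))
  · rintro ⟨q', u'⟩ ⟨hq'pos, h1, h2, heq'⟩
    have hvalu' : ∀ w, Valued.v (((u' : FiniteAdeleRing ℤ ℚ) : ProdAdicCompletions ℤ ℚ) w) = 1 := by
      intro w
      exact val_eq_one_of ((HeightOneSpectrum.mem_adicCompletionIntegers ℤ ℚ w).mp (h1 w))
        ((HeightOneSpectrum.mem_adicCompletionIntegers ℤ ℚ w).mp (h2 w)) (unit_val_mul u' w)
    have hq'val : ∀ w : HeightOneSpectrum ℤ,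
        (w.valuation ℚ (q' : ℚ) : WithZero (Multiplicative ℤ)) = Valued.v (X w) := by
      intro w
      have := congrArg (fun z : FiniteAdeleRing ℤ ℚ =>
        Valued.v ((z : ProdAdicCompletions ℤ ℚ) w)) heq'
      simp only [FAR_mul_apply, map_mul] at this
      rw [hvalu' w, mul_one, val_FAR_algebraMap] at this
      exact this.symm
    have hqq : q' = q := by
      apply rat_eq_of_val_eq hq'pos hqpos
      intro w
      rw [hq'val w, ← hqval w]
    have hQu' : Q * u' = x := by
      apply Units.ext
      rw [Units.val_mul, hQcoe, ← hqq]
      exact heq'.symm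
    have huu : u' = u := by
      rw [hu, ← hQu', inv_mul_cancel_left]
    rw [Prod.ext_iff]
    exact ⟨hqq, huu⟩
end
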